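/- Let m be a Borel probability measure on a complete separable metric space S. Then for m^∞-almost every sequence x ∈ S^∞, the empirical measures n⁻¹ ∑_{i=1}^n δ_{x_i} converge weakly to m (Varadarajan's theorem). -/

import Mathlib

open MeasureTheory ProbabilityTheory TopologicalSpace Filter Topology ENNReal

noncomputable section

open Metric

section Gfun

variable {S : Type*} [MetricSpace S]

/-- Test function approximating the indicator of an open set `U` from below. -/
def gfun (U : Set S) (j : ℕ) : BoundedContinuousFunction S ℝ :=
  BoundedContinuousFunction.mkOfBound
    ⟨fun s => min 1 ((j : ℝ) * infDist s Uᶜ),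
      continuous_const.min (continuous_const.mul (continuous_infDist_pt Uᶜ))⟩ 1
    (by
      intro x y
      have h1 : ∀ z : S, 0 ≤ min 1 ((j : ℝ) * infDist z Uᶜ) := fun z =>
        le_min zero_le_one (mul_nonneg (Nat.cast_nonneg j) infDist_nonneg)
      have h2 : ∀ z : S, min 1 ((j : ℝ) * infDist z Uᶜ) ≤ 1 := fun z => min_le_left _ _
      rw [Real.dist_eq, abs_sub_le_iff]
      constructor <;> simp only [ContinuousMap.coe_mk] <;>
        linarith [h1 x, h1 y, h2 x, h2 y])

@[simp] lemma gfun_apply (U : Set S) (j : ℕ) (s : S) :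
    gfun U j s = min 1 ((j : ℝ) * infDist s Uᶜ) := rfl

lemma gfun_nonneg (U : Set S) (j : ℕ) (s : S) : 0 ≤ gfun U j s :=
  le_min zero_le_one (mul_nonneg (Nat.cast_nonneg j) infDist_nonneg)

lemma gfun_le_one (U : Set S) (j : ℕ) (s : S) : gfun U j s ≤ 1 := min_le_left _ _

lemma gfun_le_indicator (U : Set S) (j : ℕ) (s : S) :
    gfun U j s ≤ U.indicator (fun _ => (1 : ℝ)) s := by
  by_cases hs : s ∈ U
  · simpa [Set.indicator_of_mem hs] using gfun_le_one U j s
  · have : infDist s Uᶜ = 0 := infDist_zero_of_mem hs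
    simp [Set.indicator_of_notMem hs, gfun_apply, this]

lemma gfun_tendsto (U : Set S) (hU : IsOpen U) (hne : (Uᶜ : Set S).Nonempty) (s : S) :
    Tendsto (fun j => gfun U j s) atTop (𝓝 (U.indicator (fun _ => (1 : ℝ)) s)) := by
  by_cases hs : s ∈ U
  · have hpos : 0 < infDist s Uᶜ :=
      (hU.isClosed_compl.notMem_iff_infDist_pos hne).1 (by simpa using hs)
    rw [Set.indicator_of_mem hs]
    have : ∀ᶠ j : ℕ in atTop, gfun U j s = 1 := by
      have : Tendsto (fun j : ℕ => (j : ℝ) * infDist s Uᶜ) atTop atTop :=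
        Tendsto.atTop_mul_const hpos tendsto_natCast_atTop_atTop
      filter_upwards [this.eventually_ge_atTop 1] with j hj
      rw [gfun_apply]
      exact min_eq_left hj
    exact Tendsto.congr' (this.mono fun j hj => hj.symm) tendsto_const_nhds
  · rw [Set.indicator_of_notMem hs]
    have hz : infDist s Uᶜ = 0 := infDist_zero_of_mem hs
    have : ∀ j : ℕ, gfun U j s = 0 := fun j => by
      simp [gfun_apply, hz]
    simpa [this] using tendsto_const_nhds

variable [MeasurableSpace S] [BorelSpace S]

lemma lemC {μ : Measure S} [IsProbabilityMeasure μ] {μs : ℕ → Measure S}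
    [∀ n, IsProbabilityMeasure (μs n)] {U : Set S} (hU : IsOpen U)
    (hconv : ∀ j : ℕ, Tendsto (fun n => ∫ s, gfun U j s ∂(μs n)) atTop
      (𝓝 (∫ s, gfun U j s ∂μ))) :
    μ U ≤ atTop.liminf (fun n => μs n U) := by
  rcases Set.eq_empty_or_nonempty (Uᶜ : Set S) with hUc | hUc
  · have hUuniv : U = Set.univ := by rw [← compl_compl U, hUc, Set.compl_empty]
    subst hUuniv
    simp only [measure_univ]
    rw [liminf_const]
  -- main case
  have hUm : MeasurableSet U := hU.measurableSet
  have key : ∀ j : ℕ, ENNReal.ofReal (∫ s, gfun U j s ∂μ) ≤ atTop.liminf (fun n => μs n U) := by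
    intro j
    have hle : ∀ n, ENNReal.ofReal (∫ s, gfun U j s ∂(μs n)) ≤ μs n U := by
      intro n
      have h1 : ∫ s, gfun U j s ∂(μs n) ≤ (μs n U).toReal := by
        calc ∫ s, gfun U j s ∂(μs n)
            ≤ ∫ s, U.indicator (fun _ => (1 : ℝ)) s ∂(μs n) := by
              apply integral_mono ((gfun U j).integrable _)
                ((integrable_const (1 : ℝ)).indicator hUm)
              exact gfun_le_indicator U j
          _ = (μs n U).toReal := by
              rw [integral_indicator_const (1 : ℝ) hUm]; simp; rfl
      calc ENNReal.ofReal (∫ s, gfun U j s ∂(μs n)) ≤ ENNReal.ofReal (μs n U).toReal :=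
            ENNReal.ofReal_le_ofReal h1
        _ = μs n U := ENNReal.ofReal_toReal (measure_ne_top _ _)
    have htends : Tendsto (fun n => ENNReal.ofReal (∫ s, gfun U j s ∂(μs n))) atTop
        (𝓝 (ENNReal.ofReal (∫ s, gfun U j s ∂μ))) :=
      (ENNReal.continuous_ofReal.tendsto _).comp (hconv j)
    calc ENNReal.ofReal (∫ s, gfun U j s ∂μ)
        = atTop.liminf (fun n => ENNReal.ofReal (∫ s, gfun U j s ∂(μs n))) :=
          htends.liminf_eq.symm
      _ ≤ atTop.liminf (fun n => μs n U) := liminf_le_liminf (Eventually.of_forall hle)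
  -- dominated convergence: integrals of `gfun U j` tend to `μ U`
  have hdct : Tendsto (fun j => ∫ s, gfun U j s ∂μ) atTop (𝓝 ((μ U).toReal)) := by
    have := tendsto_integral_of_dominated_convergence (μ := μ)
      (F := fun j s => gfun U j s) (f := fun s => U.indicator (fun _ => (1 : ℝ)) s)
      (bound := fun _ => (1 : ℝ))
      (fun j => (gfun U j).continuous.measurable.aestronglyMeasurable)
      (integrable_const 1)
      (fun j => Eventually.of_forall fun s => by
        rw [Real.norm_eq_abs, abs_of_nonneg (gfun_nonneg U j s)]
        exact gfun_le_one U j s)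
      (Eventually.of_forall fun s => gfun_tendsto U hU hUc s)
    rwa [show ∫ s, U.indicator (fun _ => (1 : ℝ)) s ∂μ = (μ U).toReal by
      rw [integral_indicator_const (1 : ℝ) hUm]; simp; rfl] at this
  have : Tendsto (fun j => ENNReal.ofReal (∫ s, gfun U j s ∂μ)) atTop (𝓝 (μ U)) := by
    have := (ENNReal.continuous_ofReal.tendsto _).comp hdct
    rwa [Function.comp_def, ENNReal.ofReal_toReal (measure_ne_top _ _)] at this
  exact le_of_tendsto' this key

end Gfun

/-- `π` is the infinite product (i.i.d.) measure on `ℕ → X` with all factors `ν`. -/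
def IsIIDProduct {X : Type*} [MeasurableSpace X] (ν : Measure X) (π : Measure (ℕ → X)) : Prop :=
  IsProbabilityMeasure π ∧
    ∀ (n : ℕ) (A : Fin n → Set X), (∀ i, MeasurableSet (A i)) →
      π {x | ∀ i : Fin n, x (i : ℕ) ∈ A i} = ∏ i : Fin n, ν (A i)

section IID

variable {S : Type*} [MeasurableSpace S] {m : Measure S} [IsProbabilityMeasure m]
  {π : Measure (ℕ → S)}

lemma iid_law (hπ : IsIIDProduct m π) (i : ℕ) :
    Measure.map (fun x : ℕ → S => x i) π = m := by
  ext A hA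
  rw [Measure.map_apply (measurable_pi_apply i) hA]
  have key := hπ.2 (i + 1) (fun k => if (k : ℕ) = i then A else Set.univ)
    (fun k => by split <;> [exact hA; exact MeasurableSet.univ])
  have hset : {x : ℕ → S | ∀ k : Fin (i + 1), x (k : ℕ) ∈ (if (k : ℕ) = i then A else Set.univ)}
      = (fun x : ℕ → S => x i) ⁻¹' A := by
    ext x
    simp only [Set.mem_setOf_eq, Set.mem_preimage]
    constructor
    · intro h
      have := h ⟨i, Nat.lt_succ_self i⟩
      simpa using this
    · intro h k
      split
      · rename_i hk; rw [hk]; exact h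
      · trivial
  have hprod : (∏ k : Fin (i + 1), m (if (k : ℕ) = i then A else Set.univ)) = m A := by
    have h1 : ∀ k : Fin (i + 1), m (if (k : ℕ) = i then A else Set.univ)
        = (fun k : ℕ => if k = i then m A else 1) (k : ℕ) := by
      intro k; by_cases hk : (k : ℕ) = i <;> simp [hk]
    rw [Finset.prod_congr rfl (fun k _ => h1 k),
      Fin.prod_univ_eq_prod_range (fun k : ℕ => if k = i then m A else 1) (i + 1),
      Finset.prod_ite_eq' (Finset.range (i + 1)) i (fun _ => m A)]
    simp
  rw [hset, hprod] at key
  exact key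

lemma iid_indep (hπ : IsIIDProduct m π) {i j : ℕ} (hij : i ≠ j) :
    IndepFun (fun x : ℕ → S => x i) (fun x : ℕ → S => x j) π := by
  rw [indepFun_iff_measure_inter_preimage_eq_mul]
  intro A B hA hB
  have hπA : π ((fun x : ℕ → S => x i) ⁻¹' A) = m A := by
    rw [← Measure.map_apply (measurable_pi_apply i) hA, iid_law hπ i]
  have hπB : π ((fun x : ℕ → S => x j) ⁻¹' B) = m B := by
    rw [← Measure.map_apply (measurable_pi_apply j) hB, iid_law hπ j]
  set n := max i j + 1 with hn
  have hi : i < n := Nat.lt_succ_of_le (le_max_left i j)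
  have hj : j < n := Nat.lt_succ_of_le (le_max_right i j)
  have key := hπ.2 n (fun k => if (k : ℕ) = i then A else if (k : ℕ) = j then B else Set.univ)
    (fun k => by split_ifs <;>
      first | exact hA | exact hB | exact MeasurableSet.univ)
  have hset : {x : ℕ → S | ∀ k : Fin n,
        x (k : ℕ) ∈ (if (k : ℕ) = i then A else if (k : ℕ) = j then B else Set.univ)}
      = (fun x : ℕ → S => x i) ⁻¹' A ∩ (fun x : ℕ → S => x j) ⁻¹' B := by
    ext x
    simp only [Set.mem_setOf_eq, Set.mem_inter_iff, Set.mem_preimage]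
    constructor
    · intro h
      constructor
      · have := h ⟨i, hi⟩; simpa using this
      · have := h ⟨j, hj⟩; simpa [hij.symm] using this
    · rintro ⟨h1, h2⟩ k
      split
      · rename_i hk; rw [hk]; exact h1
      · split
        · rename_i hk; rw [hk]; exact h2
        · trivial
  have hprod : (∏ k : Fin n,
        m (if (k : ℕ) = i then A else if (k : ℕ) = j then B else Set.univ)) = m A * m B := by
    have h1 : ∀ k : Fin n, m (if (k : ℕ) = i then A else if (k : ℕ) = j then B else Set.univ)
        = (fun k : ℕ => (if k = i then m A else 1) * (if k = j then m B else 1)) (k : ℕ) := by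
      intro k
      by_cases hki : (k : ℕ) = i
      · simp [hki, hij]
      · by_cases hkj : (k : ℕ) = j <;> simp [hki, hkj, Ne.symm hij]
    rw [Finset.prod_congr rfl (fun k _ => h1 k),
      Fin.prod_univ_eq_prod_range
        (fun k : ℕ => (if k = i then m A else 1) * (if k = j then m B else 1)) n,
      Finset.prod_mul_distrib,
      Finset.prod_ite_eq' (Finset.range n) i (fun _ => m A),
      Finset.prod_ite_eq' (Finset.range n) j (fun _ => m B)]
    simp [Finset.mem_range.mpr hi, Finset.mem_range.mpr hj]
  rw [hset, hprod] at key
  rw [key, hπA, hπB]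

variable [MetricSpace S] [BorelSpace S]

lemma iid_slln (hπ : IsIIDProduct m π) (f : BoundedContinuousFunction S ℝ) :
    ∀ᵐ x ∂π, Tendsto (fun n => (∑ i ∈ Finset.range (n + 1), f (x i)) / ((n + 1 : ℕ) : ℝ))
      atTop (𝓝 (∫ s, f s ∂m)) := by
  set X : ℕ → (ℕ → S) → ℝ := fun i x => f (x i) with hX
  have hmeas : ∀ i, Measurable (X i) := fun i =>
    f.continuous.measurable.comp (measurable_pi_apply i)
  have hmap : ∀ i, Measure.map (X i) π = Measure.map f m := by
    intro i
    show Measure.map (f ∘ fun x : ℕ → S => x i) π = Measure.map f m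
    rw [← Measure.map_map f.continuous.measurable (measurable_pi_apply i), iid_law hπ i]
  have hint : Integrable (X 0) π := by
    have : Integrable (f ∘ fun x : ℕ → S => x 0) π := by
      rw [← integrable_map_measure f.continuous.measurable.aestronglyMeasurable
        (measurable_pi_apply 0).aemeasurable, iid_law hπ 0]
      exact f.integrable m
    exact this
  have hindep : Pairwise (Function.onFun (IndepFun · · π) X) := by
    intro i j hij
    exact (iid_indep hπ hij).comp f.continuous.measurable f.continuous.measurable
  have hident : ∀ i, IdentDistrib (X i) (X 0) π π := fun i =>
    ⟨(hmeas i).aemeasurable, (hmeas 0).aemeasurable, by rw [hmap i, hmap 0]⟩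
  have hexp : π[X 0] = ∫ s, f s ∂m := by
    have : π[X 0] = ∫ y, f y ∂(Measure.map (fun x : ℕ → S => x 0) π) := by
      rw [integral_map (measurable_pi_apply 0).aemeasurable
        f.continuous.measurable.aestronglyMeasurable]
    rw [this, iid_law hπ 0]
  filter_upwards [strong_law_ae_real X hint hindep hident] with x hx
  rw [hexp] at hx
  have h2 := hx.comp (tendsto_add_atTop_nat 1)
  apply h2.congr
  intro n
  simp [Function.comp, hX]

end IID

/-- Varadarajan's theorem: for a Borel probability measure `m` on a Polish space `S`,
for `m^∞`-a.e. sequence `x`, the empirical measures `n⁻¹ ∑_{i=1}^n δ_{x_i}` converge weakly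
to `m`. -/
theorem stmt9 {S : Type*}
    [MetricSpace S] [CompleteSpace S] [SeparableSpace S] [MeasurableSpace S] [BorelSpace S]
    (m : Measure S) [IsProbabilityMeasure m]
    (π : Measure (ℕ → S)) (hπ : IsIIDProduct m π)
    (e : (ℕ → S) → ℕ → ProbabilityMeasure S)
    (he : ∀ x n, (e x n : Measure S)
      = ((n + 1 : ℕ) : ℝ≥0∞)⁻¹ • ∑ i ∈ Finset.range (n + 1), Measure.dirac (x i))
    (mP : ProbabilityMeasure S) (hmP : (mP : Measure S) = m) :
    ∀ᵐ x ∂π, Tendsto (fun n => e x n) atTop (𝓝 mP) := by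
  classical
  haveI : IsProbabilityMeasure π := hπ.1
  -- the integral of a bounded continuous function against an empirical measure
  have hint : ∀ (f : BoundedContinuousFunction S ℝ) x n,
      ∫ s, f s ∂((e x n : Measure S))
        = (∑ i ∈ Finset.range (n + 1), f (x i)) / ((n + 1 : ℕ) : ℝ) := by
    intro f x n
    rw [he, integral_smul_measure, integral_finset_sum_measure (fun i _ => f.integrable _)]
    simp only [integral_dirac]
    rw [ENNReal.toReal_inv, ENNReal.toReal_natCast, smul_eq_mul, inv_mul_eq_div]
  -- the countable family of test functions
  haveI : Countable ↥(countableBasis S) := (countable_countableBasis S).to_subtype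
  set Uset : Finset ↥(countableBasis S) → Set S := fun t => ⋃ b ∈ t, (b : Set S) with hUset
  have hUopen : ∀ t, IsOpen (Uset t) := fun t =>
    isOpen_biUnion (fun b _ => isOpen_of_mem_countableBasis b.2)
  have hae : ∀ᵐ x ∂π, ∀ (t : Finset ↥(countableBasis S)) (j : ℕ),
      Tendsto (fun n => ∫ s, gfun (Uset t) j s ∂((e x n : Measure S))) atTop
        (𝓝 (∫ s, gfun (Uset t) j s ∂m)) := by
    rw [ae_all_iff]
    intro t
    rw [ae_all_iff]
    intro j
    filter_upwards [iid_slln hπ (gfun (Uset t) j)] with x hx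
    have heq : ∀ n, ∫ s, gfun (Uset t) j s ∂((e x n : Measure S))
        = (∑ i ∈ Finset.range (n + 1), gfun (Uset t) j (x i)) / ((n + 1 : ℕ) : ℝ) :=
      hint (gfun (Uset t) j) x
    exact hx.congr fun n => (heq n).symm
  filter_upwards [hae] with x hx
  apply MeasureTheory.tendsto_of_forall_isOpen_le_liminf
  intro G hG
  -- the ℝ≥0∞-valued version of the inequality
  have main : m G ≤ atTop.liminf (fun n => (e x n : Measure S) G) := by
    have hGdecomp : G = ⋃₀ {s | s ∈ countableBasis S ∧ s ⊆ G} :=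
      (isBasis_countableBasis S).open_eq_sUnion' hG
    haveI : Countable ↥{s | s ∈ countableBasis S ∧ s ⊆ G} :=
      ((countable_countableBasis S).mono (fun s hs => hs.1)).to_subtype
    set V : Finset ↥{s | s ∈ countableBasis S ∧ s ⊆ G} → Set S :=
      fun t => ⋃ b ∈ t, (b : Set S) with hV
    have hVmono : Monotone V := by
      intro t t' h
      exact Set.biUnion_subset_biUnion_left (fun b hb => h hb)
    have hVG : ∀ t, V t ⊆ G := fun t => Set.iUnion₂_subset fun b _ => b.2.2
    have hGV : G = ⋃ t, V t := by
      apply Set.Subset.antisymm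
      · intro s hs
        rw [hGdecomp] at hs
        obtain ⟨b, hb, hsb⟩ := hs
        exact Set.mem_iUnion.2 ⟨{⟨b, hb⟩}, by simp [hV, hsb]; exact hb⟩
      · exact Set.iUnion_subset fun t => hVG t
    have hsup : m G = ⨆ t, m (V t) := by
      conv_lhs => rw [hGV]
      exact Monotone.measure_iUnion hVmono
    rw [hsup]
    apply iSup_le
    intro t
    set t' : Finset ↥(countableBasis S) :=
      t.image (fun b => (⟨b.1, b.2.1⟩ : {s : Set S // s ∈ countableBasis S})) with ht'
    have hVt : Uset t' = V t := by
      ext s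
      simp only [hUset, hV, ht', Set.mem_iUnion, Finset.mem_image]
      constructor
      · rintro ⟨b, ⟨c, hc, rfl⟩, hs⟩
        exact ⟨c, hc, hs⟩
      · rintro ⟨c, hc, hs⟩
        exact ⟨⟨(c : Set S), c.2.1⟩, ⟨c, hc, rfl⟩, hs⟩
    have h1 : m (Uset t') ≤ atTop.liminf (fun n => (e x n : Measure S) (Uset t')) :=
      lemC (hUopen t') (fun j => hx t' j)
    have h2 : ∀ n, (e x n : Measure S) (Uset t') ≤ (e x n : Measure S) G := fun n =>
      measure_mono (hVt ▸ hVG t)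
    calc m (V t) = m (Uset t') := by rw [hVt]
      _ ≤ atTop.liminf (fun n => (e x n : Measure S) (Uset t')) := h1
      _ ≤ atTop.liminf (fun n => (e x n : Measure S) G) :=
          liminf_le_liminf (Eventually.of_forall h2)
  -- convert to the ℝ≥0-valued statement
  have aux : (ENNReal.ofNNReal (atTop.liminf fun n => e x n G))
      = atTop.liminf (fun n => ((e x n G : NNReal) : ℝ≥0∞)) := by
    refine Monotone.map_liminf_of_continuousAt (F := atTop) ENNReal.coe_mono
      (fun n => e x n G) ?_ ?_ ?_
    · exact ENNReal.continuous_coe.continuousAt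
    · refine IsBoundedUnder.isCoboundedUnder_ge ⟨1, eventually_map.2 ?_⟩
      exact Eventually.of_forall fun n => ProbabilityMeasure.apply_le_one (e x n) G
    · refine ⟨0, ?_⟩
      filter_upwards with n
      simp
  rw [← ENNReal.coe_le_coe, aux]
  simp only [ProbabilityMeasure.ennreal_coeFn_eq_coeFn_toMeasure]
  rw [hmP]
  exact main

end
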